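/- Energy cancellation of the α-term in the LANS energy estimate: let u : ℝ³ → ℝ³ be a vector field each of whose components is a Schwartz function, and suppose div u = Σ_{i=1}^{3} ∂_{x_i} u_i = 0. Then Σ_{i,j=1}^{3} ∫_{ℝ³} [ u_i (∂_{x_i} Δu_j) u_j + (Δu_i)(∂_{x_j} u_i) u_j ] dx = 0, where Δ denotes the spatial Laplacian acting componentwise. -/

import Mathlib

open MeasureTheory Real
open scoped FourierTransform ENNReal

noncomputable section

/-- The partial derivative `∂_{x_i} f` of a function on `ℝ³`. -/
def pd (i : Fin 3) (f : EuclideanSpace ℝ (Fin 3) → ℝ) : EuclideanSpace ℝ (Fin 3) → ℝ :=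
  fun x => fderiv ℝ f x (EuclideanSpace.single i 1)

/-- The Laplacian `Δ f = Σ_i ∂_{x_i}² f` of a function on `ℝ³`. -/
def lap (f : EuclideanSpace ℝ (Fin 3) → ℝ) : EuclideanSpace ℝ (Fin 3) → ℝ :=
  fun x => ∑ i : Fin 3, pd i (pd i f) x

namespace AlphaAux

abbrev E3 := EuclideanSpace ℝ (Fin 3)

lemma schwartz_hasTemperateGrowth (f : SchwartzMap E3 ℝ) :
    Function.HasTemperateGrowth (⇑f) := by
  refine ⟨f.smooth ⊤, fun n => ⟨0, SchwartzMap.seminorm ℝ 0 n f, fun x => ?_⟩⟩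
  simpa using f.norm_iteratedFDeriv_le_seminorm ℝ n x

/-- Product of two Schwartz functions, as a Schwartz function. -/
def mulS (f g : SchwartzMap E3 ℝ) : SchwartzMap E3 ℝ :=
  SchwartzMap.bilinLeftCLM (ContinuousLinearMap.mul ℝ ℝ) (schwartz_hasTemperateGrowth g) f

@[simp] lemma mulS_apply (f g : SchwartzMap E3 ℝ) (x : E3) : mulS f g x = f x * g x := rfl

/-- Partial derivative as an operator on Schwartz space. -/
def D (i : Fin 3) : SchwartzMap E3 ℝ →L[ℝ] SchwartzMap E3 ℝ :=
  LineDeriv.lineDerivOpCLM ℝ (SchwartzMap E3 ℝ) (EuclideanSpace.single i (1 : ℝ) : E3)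

lemma D_apply (i : Fin 3) (f : SchwartzMap E3 ℝ) (x : E3) :
    D i f x = fderiv ℝ (⇑f) x (EuclideanSpace.single i 1) :=
  SchwartzMap.lineDerivOp_apply_eq_fderiv (EuclideanSpace.single i (1 : ℝ) : E3) f x

lemma pd_coe (i : Fin 3) (f : SchwartzMap E3 ℝ) : pd i ⇑f = ⇑(D i f) := by
  funext x; rw [pd, D_apply]

/-- Laplacian as an operator on Schwartz space. -/
def L (f : SchwartzMap E3 ℝ) : SchwartzMap E3 ℝ := ∑ i : Fin 3, D i (D i f)

lemma lap_coe (f : SchwartzMap E3 ℝ) : lap ⇑f = ⇑(L f) := by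
  funext x
  have : ∀ i : Fin 3, pd i (pd i ⇑f) x = D i (D i f) x := by
    intro i; rw [pd_coe, pd_coe]
  simp only [lap, this, L]
  rw [← SchwartzMap.coe_coeHom, map_sum (FunLike.coeAddMonoidHom (SchwartzMap E3 ℝ) E3 ℝ), Finset.sum_apply]

lemma int_mul (f g : SchwartzMap E3 ℝ) :
    Integrable (fun x => f x * g x) (volume : Measure E3) := by
  have := (mulS f g).integrable (μ := (volume : Measure E3))
  exact this

/-- Integration by parts for Schwartz functions. -/
lemma ibp (f g : SchwartzMap E3 ℝ) (v : E3) :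
    ∫ x, f x * fderiv ℝ (⇑g) x v = -∫ x, fderiv ℝ (⇑f) x v * g x := by
  apply integral_mul_fderiv_eq_neg_fderiv_mul_of_integrable
  · have := int_mul (LineDeriv.lineDerivOpCLM ℝ (SchwartzMap E3 ℝ) v f) g
    simpa [SchwartzMap.lineDerivOp_apply_eq_fderiv] using this
  · have := int_mul f (LineDeriv.lineDerivOpCLM ℝ (SchwartzMap E3 ℝ) v g)
    simpa [SchwartzMap.lineDerivOp_apply_eq_fderiv] using this
  · exact int_mul f g
  · exact fun x _ => f.differentiableAt
  · exact fun x _ => g.differentiableAt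

lemma D_mulS (j : Fin 3) (f g : SchwartzMap E3 ℝ) (x : E3) :
    D j (mulS f g) x = D j f x * g x + f x * D j g x := by
  have hcoe : ⇑(mulS f g) = fun y => f y * g y := rfl
  rw [D_apply, hcoe, fderiv_fun_mul f.differentiableAt g.differentiableAt]
  simp [D_apply, mul_comm]
  ring

/-- Transport term against a divergence-free field integrates to zero. -/
lemma transport_zero (u : Fin 3 → SchwartzMap E3 ℝ)
    (hdiv : ∀ x, ∑ i : Fin 3, pd i (⇑(u i)) x = 0) (g : SchwartzMap E3 ℝ) :
    ∑ j : Fin 3, ∫ x, u j x * D j g x = 0 := by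
  have h1 : ∀ j : Fin 3, ∫ x, u j x * D j g x = -∫ x, D j (u j) x * g x := by
    intro j
    have := ibp (u j) g (EuclideanSpace.single j 1)
    simpa [D_apply] using this
  calc ∑ j : Fin 3, ∫ x, u j x * D j g x
      = -∑ j : Fin 3, ∫ x, D j (u j) x * g x := by
        rw [← Finset.sum_neg_distrib]; exact Finset.sum_congr rfl fun j _ => h1 j
    _ = -∫ x, ∑ j : Fin 3, D j (u j) x * g x := by
        rw [integral_finset_sum _ fun j _ => int_mul (D j (u j)) g]
    _ = 0 := by
        have : ∀ x : E3, ∑ j : Fin 3, D j (u j) x * g x = 0 := by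
          intro x
          rw [← Finset.sum_mul]
          have h := hdiv x
          simp only [pd_coe] at h
          rw [h, zero_mul]
        simp [this]

end AlphaAux

open AlphaAux

/-- energy cancellation of the α-term in the LANS energy
estimate: if `u` is a divergence-free vector field on `ℝ³` with Schwartz
components, then `Σ_{i,j} ∫ [u_i (∂_{x_i} Δu_j) u_j + (Δu_i)(∂_{x_j} u_i) u_j] dx = 0`. -/
theorem alpha_term_cancellation
    (u : Fin 3 → SchwartzMap (EuclideanSpace ℝ (Fin 3)) ℝ)
    (hdiv : ∀ x, ∑ i : Fin 3, pd i (⇑(u i)) x = 0) :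
    ∑ i : Fin 3, ∑ j : Fin 3,
      ∫ x, (u i x * pd i (lap (⇑(u j))) x * u j x
              + lap (⇑(u i)) x * pd j (⇑(u i)) x * u j x) = 0 := by
  -- rewrite everything through Schwartz operators
  have key : ∀ i j : Fin 3,
      (∫ x, (u i x * pd i (lap (⇑(u j))) x * u j x
              + lap (⇑(u i)) x * pd j (⇑(u i)) x * u j x))
      = (∫ x, u i x * D i (L (u j)) x * u j x)
        + ∫ x, L (u i) x * D j (u i) x * u j x := by
    intro i j
    have h1 : Integrable (fun x => u i x * D i (L (u j)) x * u j x) (volume : Measure E3) := by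
      have := int_mul (mulS (u i) (D i (L (u j)))) (u j)
      simpa [mul_assoc] using this
    have h2 : Integrable (fun x => L (u i) x * D j (u i) x * u j x) (volume : Measure E3) := by
      have := int_mul (mulS (L (u i)) (D j (u i))) (u j)
      simpa [mul_assoc] using this
    rw [← integral_add h1 h2]
    apply integral_congr_ae
    filter_upwards with x
    simp only [lap_coe, pd_coe]
  simp_rw [key]
  simp only [Finset.sum_add_distrib]
  have hswap : ∑ i : Fin 3, ∑ j : Fin 3, (∫ x, u i x * D i (L (u j)) x * u j x)
      = ∑ i : Fin 3, ∑ j : Fin 3, (∫ x, u j x * D j (L (u i)) x * u i x) :=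
    Finset.sum_comm
  rw [hswap]
  simp only [← Finset.sum_add_distrib]
  have step : ∀ i : Fin 3,
      (∑ j : Fin 3, ((∫ x, u j x * D j (L (u i)) x * u i x)
          + ∫ x, L (u i) x * D j (u i) x * u j x))
      = ∑ j : Fin 3, ∫ x, u j x * D j (mulS (L (u i)) (u i)) x := by
    intro i
    refine Finset.sum_congr rfl fun j _ => ?_
    have h1 : Integrable (fun x => u j x * D j (L (u i)) x * u i x) (volume : Measure E3) := by
      have := int_mul (mulS (u j) (D j (L (u i)))) (u i)
      simpa [mul_assoc] using this
    have h2 : Integrable (fun x => L (u i) x * D j (u i) x * u j x) (volume : Measure E3) := by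
      have := int_mul (mulS (L (u i)) (D j (u i))) (u j)
      simpa [mul_assoc] using this
    rw [← integral_add h1 h2]
    apply integral_congr_ae
    filter_upwards with x
    rw [D_mulS]
    ring
  have final : ∀ i : Fin 3,
      (∑ j : Fin 3, ∫ x, u j x * D j (mulS (L (u i)) (u i)) x) = 0 :=
    fun i => transport_zero u hdiv (mulS (L (u i)) (u i))
  calc ∑ i : Fin 3, ∑ j : Fin 3, ((∫ x, u j x * D j (L (u i)) x * u i x)
          + ∫ x, L (u i) x * D j (u i) x * u j x)
      = ∑ i : Fin 3, (0 : ℝ) := Finset.sum_congr rfl fun i _ => (step i).trans (final i)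
    _ = 0 := by simp
end
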